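/- Let ω = (−1 + i√3)/2 and let Q be an n×n nontrivial cube root Seidel matrix in standard form satisfying Q² = (n−1)·I + μ·Q for a real number μ, and set e = (n − μ − 2)/3. Then for every row index i different from the first, the number of column indices j different from the first and from i with Q_{ij} = 1 equals n − 2 − 2e, and this number is at least n/9 (i.e., 9·(n − 2 − 2e) ≥ n); in particular, every row other than the first contains at least one off-diagonal entry equal to 1 outside the first column. -/

import Mathlib

/-- `ω = (−1 + i√3)/2`, a primitive cube root of unity. -/
noncomputable def ω3 : ℂ := (-1 + Complex.I * Real.sqrt 3) / 2

/-- A cube root Seidel matrix: self-adjoint, zero diagonal, off-diagonal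
entries among the cube roots of unity. -/
def IsCubeRootSeidel {n : ℕ} (Q : Matrix (Fin n) (Fin n) ℂ) : Prop :=
  Q.IsHermitian ∧ (∀ i, Q i i = 0) ∧
    ∀ i j, i ≠ j → Q i j = 1 ∨ Q i j = ω3 ∨ Q i j = ω3 ^ 2

/-- Standard form: every off-diagonal entry in the first row and first column
equals 1. -/
def IsStandardForm {n : ℕ} (Q : Matrix (Fin n) (Fin n) ℂ) : Prop :=
  ∀ i j : Fin n, i ≠ j → (i.val = 0 ∨ j.val = 0) → Q i j = 1

/-- Nontrivial: some off-diagonal entry is not equal to 1. -/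
def IsNontrivial {n : ℕ} (Q : Matrix (Fin n) (Fin n) ℂ) : Prop :=
  ∃ i j : Fin n, i ≠ j ∧ Q i j ≠ 1

lemma sqrt3_pos : (0:ℝ) < Real.sqrt 3 := Real.sqrt_pos.2 (by norm_num)

lemma omega_re : ω3.re = -(1/2) := by
  simp [ω3, Complex.div_re, Complex.add_re, Complex.mul_re]; norm_num

lemma omega_im : ω3.im = Real.sqrt 3 / 2 := by
  simp [ω3, Complex.div_im, Complex.add_im, Complex.mul_im]

lemma omega_sq : ω3 ^ 2 = (-1 - Complex.I * Real.sqrt 3) / 2 := by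
  have h : (Real.sqrt 3 : ℂ) ^ 2 = 3 := by
    rw [← Complex.ofReal_pow, Real.sq_sqrt (by norm_num : (3:ℝ) ≥ 0)]
    norm_num
  have hI := Complex.I_sq
  rw [ω3]
  field_simp
  linear_combination (((Real.sqrt 3 : ℝ):ℂ)^2)*hI - h

lemma omega_sq_re : (ω3^2).re = -(1/2) := by
  rw [omega_sq]
  simp [Complex.div_re, Complex.add_re, Complex.mul_re]; norm_num

lemma omega_sq_im : (ω3^2).im = -(Real.sqrt 3 / 2) := by
  rw [omega_sq]
  simp [Complex.div_im, Complex.sub_im, Complex.mul_im]; ring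

lemma star_omega : star ω3 = ω3 ^ 2 := by
  rw [omega_sq, ω3]
  apply Complex.ext <;> simp [Complex.div_re, Complex.div_im]

lemma star_omega_sq : star (ω3 ^ 2) = ω3 := by
  rw [omega_sq, ω3]
  apply Complex.ext <;> simp [Complex.div_re, Complex.div_im]

lemma omega_ne_one : ω3 ≠ 1 := by
  intro h
  have := congrArg Complex.im h
  rw [omega_im] at this
  simp at this

lemma omega_sq_ne_one : ω3 ^ 2 ≠ 1 := by
  intro h
  have := congrArg Complex.im h
  rw [omega_sq_im] at this
  simp at this

lemma omega_ne_omega_sq : ω3 ≠ ω3 ^ 2 := by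
  intro h
  have := congrArg Complex.im h
  rw [omega_im, omega_sq_im] at this
  nlinarith [sqrt3_pos]
open Finset in
lemma row_counts {n : ℕ} (Q : Matrix (Fin n) (Fin n) ℂ) (μ : ℝ)
    (hQ : IsCubeRootSeidel Q) (hsf : IsStandardForm Q)
    (hn : 3 ≤ n)
    (heq : Q ^ 2 = ((n : ℂ) - 1) • (1 : Matrix (Fin n) (Fin n) ℂ) + (μ : ℂ) • Q)
    (i : Fin n) (hi : i.val ≠ 0) :
    ∃ a b : ℕ,
      a + 2 * b + 2 = n ∧ ((a:ℝ) - b = μ) ∧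
      a = (univ.filter (fun j : Fin n => j.val ≠ 0 ∧ j ≠ i ∧ Q i j = 1)).card ∧
      b = (univ.filter (fun j : Fin n => j.val ≠ 0 ∧ j ≠ i ∧ Q i j = ω3)).card := by
  have hn0 : 0 < n := by omega
  set z0 : Fin n := ⟨0, hn0⟩ with hz0def
  have hiz : i ≠ z0 := by
    intro h; apply hi; rw [h]
  set T : Finset (Fin n) := univ.filter (fun j => j ≠ z0 ∧ j ≠ i) with hT
  set A : Finset (Fin n) := T.filter (fun j => Q i j = 1) with hA
  set B : Finset (Fin n) := T.filter (fun j => Q i j = ω3) with hB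
  set C : Finset (Fin n) := T.filter (fun j => Q i j = ω3 ^ 2) with hC
  have hfe : ∀ (x : ℂ), univ.filter (fun j : Fin n => j.val ≠ 0 ∧ j ≠ i ∧ Q i j = x)
      = T.filter (fun j => Q i j = x) := by
    intro x; ext j
    simp only [Finset.mem_filter, Finset.mem_univ, true_and, hT]
    constructor
    · rintro ⟨h0, hji, hx⟩; exact ⟨⟨fun h => h0 (by rw [h]), hji⟩, hx⟩
    · rintro ⟨⟨hz, hji⟩, hx⟩; exact ⟨fun h => hz (Fin.ext h), hji, hx⟩
  -- main equation at entry (i, z0)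
  have hentry : ∑ j, Q i j * Q j z0 = (μ:ℂ) := by
    have h2 := congrFun (congrFun heq i) z0
    rw [pow_two, Matrix.mul_apply] at h2
    rw [h2]
    simp [Matrix.add_apply, Matrix.smul_apply, Matrix.one_apply_ne hiz,
      hsf i z0 hiz (Or.inr rfl)]
  have hss : ∑ j ∈ T, Q i j * Q j z0 = ∑ j, Q i j * Q j z0 := by
    apply Finset.sum_subset (Finset.subset_univ T)
    intro j _ hj
    rw [hT, Finset.mem_filter] at hj
    push_neg at hj
    by_cases hjz : j = z0
    · subst hjz; rw [hQ.2.1, mul_zero]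
    · rw [hj (Finset.mem_univ j) hjz, hQ.2.1, zero_mul]
  have hTsum : ∑ j ∈ T, Q i j = (μ:ℂ) := by
    rw [← hentry, ← hss]
    apply Finset.sum_congr rfl
    intro j hj
    rw [hT, Finset.mem_filter] at hj
    rw [hsf j z0 hj.2.1 (Or.inr rfl), mul_one]
  have htri : ∀ j ∈ T, Q i j = 1 ∨ Q i j = ω3 ∨ Q i j = ω3 ^ 2 := by
    intro j hj
    rw [hT, Finset.mem_filter] at hj
    exact hQ.2.2 i j (Ne.symm hj.2.2)
  set T' : Finset (Fin n) := T.filter (fun j => ¬ Q i j = 1) with hT'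
  have eqB : T'.filter (fun j => Q i j = ω3) = B := by
    rw [hT', hB, Finset.filter_filter]
    apply Finset.filter_congr
    intro j hj
    simp only [and_iff_right_iff_imp]
    intro h hq; rw [h] at hq; exact omega_ne_one hq
  have eqC : T'.filter (fun j => ¬ Q i j = ω3) = C := by
    ext j
    rw [hT', hC]
    simp only [Finset.mem_filter, and_assoc]
    constructor
    · rintro ⟨hjT, h1, h2⟩
      rcases htri j hjT with h | h | h
      · exact absurd h h1
      · exact absurd h h2
      · exact ⟨hjT, h⟩
    · rintro ⟨hjT, h⟩
      refine ⟨hjT, ?_, ?_⟩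
      · rw [h]; exact omega_sq_ne_one
      · rw [h]; exact fun hh => omega_ne_omega_sq hh.symm
  have hsplit : (A.card : ℂ) * 1 + B.card * ω3 + C.card * ω3^2 = (μ:ℂ) := by
    rw [← hTsum, ← Finset.sum_filter_add_sum_filter_not T (fun j => Q i j = 1),
      ← Finset.sum_filter_add_sum_filter_not T' (fun j => Q i j = ω3)]
    have e1 : ∑ j ∈ T.filter (fun j => Q i j = 1), Q i j = (A.card : ℂ) * 1 := by
      rw [Finset.sum_congr rfl (fun j hj => (Finset.mem_filter.1 hj).2), Finset.sum_const,
        nsmul_eq_mul, hA]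
    have e2 : ∑ j ∈ T'.filter (fun j => Q i j = ω3), Q i j = (B.card : ℂ) * ω3 := by
      rw [eqB, Finset.sum_congr rfl (fun j hj => (Finset.mem_filter.1 hj).2), Finset.sum_const,
        nsmul_eq_mul]
    have e3 : ∑ j ∈ T'.filter (fun j => ¬ Q i j = ω3), Q i j = (C.card : ℂ) * ω3^2 := by
      rw [eqC, Finset.sum_congr rfl (fun j hj => (Finset.mem_filter.1 hj).2), Finset.sum_const,
        nsmul_eq_mul]
    rw [e1, e2, e3]
    ring
  have hcardT : T.card = n - 2 := by
    have hTe : T = (univ.erase i).erase z0 := by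
      ext j
      simp [hT, Finset.mem_erase, and_comm]
    have hm : z0 ∈ univ.erase i := Finset.mem_erase.2 ⟨Ne.symm hiz, Finset.mem_univ z0⟩
    rw [hTe, Finset.card_erase_of_mem hm, Finset.card_erase_of_mem (Finset.mem_univ i),
      Finset.card_univ, Fintype.card_fin]
    omega
  have hcardsum : A.card + B.card + C.card = n - 2 := by
    have h1 : A.card + T'.card = T.card := by
      rw [hA, hT']
      exact Finset.card_filter_add_card_filter_not _
    have h2 : B.card + C.card = T'.card := by
      rw [← eqB, ← eqC]
      exact Finset.card_filter_add_card_filter_not _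
    omega
  have hre := congrArg Complex.re hsplit
  have him := congrArg Complex.im hsplit
  simp only [Complex.add_re, Complex.add_im, Complex.mul_re, Complex.mul_im,
    Complex.natCast_re, Complex.natCast_im, Complex.ofReal_re, Complex.ofReal_im,
    Complex.one_re, Complex.one_im, omega_re, omega_im, omega_sq_re, omega_sq_im,
    mul_zero, zero_mul, mul_one, add_zero, zero_add, sub_zero] at hre him
  have hbc : (B.card : ℝ) = C.card := by
    have h3 : ((B.card : ℝ) - C.card) * (Real.sqrt 3 / 2) = 0 := by linarith
    rcases mul_eq_zero.1 h3 with h | h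
    · linarith
    · nlinarith [sqrt3_pos]
  have hbcn : B.card = C.card := by exact_mod_cast hbc
  refine ⟨A.card, B.card, ?_, ?_, ?_, ?_⟩
  · omega
  · rw [← hre, hbc]; ring
  · rw [hfe 1, ← hA]
  · rw [hfe ω3, ← hB]
lemma key_ineq (n a b m : ℕ) (hb : 1 ≤ b) (hn : a + 2*b + 2 = n) (hm : m ≤ n)
    (d : ℝ) (hd0 : 0 ≤ d) (hd2 : d^2 = ((a:ℝ)-b)^2 + 4*((n:ℝ)-1))
    (htr : (m:ℝ) * (((a:ℝ)-(b:ℝ)) + d) = ((n:ℝ)-m) * (d - ((a:ℝ)-b))) :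
    n ≤ 9*a := by
  by_cases hc : 2*m = n
  · -- equal multiplicities : μ = 0
    have hm0 : 0 < m := by omega
    have hnm : (n:ℝ) - m = m := by
      have : (n:ℝ) = 2*m := by exact_mod_cast hc.symm
      linarith
    rw [hnm] at htr
    have h2 : (m:ℝ) * ((a:ℝ)-(b:ℝ)) = 0 := by nlinarith [htr]
    rcases mul_eq_zero.1 h2 with h | h
    · exact absurd h (by positivity)
    · have : (a:ℝ) = b := by linarith
      have hab : a = b := by exact_mod_cast this
      omega
  · have hne : (n:ℝ) - 2*m ≠ 0 := by
      intro h
      apply hc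
      have : (2*m : ℝ) = n := by linarith
      exact_mod_cast this
    have hd : d * ((n:ℝ) - 2*m) = (n:ℝ) * ((a:ℝ)-b) := by nlinarith [htr]
    have hne' : ((n:ℚ) - 2*m) ≠ 0 := by
      intro h
      apply hne
      have := congrArg (fun q : ℚ => (q:ℝ)) h
      push_cast at this
      linarith
    set r : ℚ := ((n:ℚ) * ((a:ℚ) - b)) / ((n:ℚ) - 2*m) with hr
    have hrd : (r:ℝ) = d := by
      rw [hr]
      push_cast
      rw [div_eq_iff (by push_cast at hne' ⊢; exact_mod_cast hne')]
      linarith [hd]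
    have hr2 : r^2 = ((a:ℚ)-b)^2 + 4*((n:ℚ)-1) := by
      have h1 : ((r^2 : ℚ) : ℝ) = ((((a:ℚ)-b)^2 + 4*((n:ℚ)-1) : ℚ) : ℝ) := by
        push_cast
        rw [hrd]
        push_cast at hd2
        linarith [hd2]
      exact_mod_cast h1
    have hden : r.den = 1 := by
      have h1 : r * r = ((((a:ℤ)-b)^2 + 4*((n:ℤ)-1) : ℤ) : ℚ) := by
        push_cast
        rw [← sq]
        push_cast at hr2
        linarith [hr2]
      have h2 : (r*r).den = 1 := by rw [h1]; exact Rat.den_intCast _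
      rw [Rat.mul_self_den] at h2
      exact Nat.eq_one_of_mul_eq_one_left h2
    obtain ⟨K, hK⟩ : ∃ K : ℤ, (K:ℚ) = r := ⟨r.num, (Rat.den_eq_one_iff r).1 hden⟩
    have hKd : (K:ℝ) = d := by
      rw [← hrd, ← hK]
      push_cast
      rfl
    have hK0 : 0 ≤ K := by
      have : (0:ℝ) ≤ (K:ℝ) := by rw [hKd]; exact hd0
      exact_mod_cast this
    have hK2 : K^2 = ((a:ℤ)-b)^2 + 4*((n:ℤ)-1) := by
      have : ((K:ℝ))^2 = ((a:ℝ)-b)^2 + 4*((n:ℝ)-1) := by rw [hKd]; exact hd2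
      exact_mod_cast this
    have htrZ : (m:ℤ) * (((a:ℤ)-b) + K) = ((n:ℤ)-m) * (K - ((a:ℤ)-b)) := by
      have : ((m:ℝ)) * (((a:ℝ)-b) + (K:ℝ)) = ((n:ℝ)-m) * ((K:ℝ) - ((a:ℝ)-b)) := by
        rw [hKd]; exact htr
      exact_mod_cast this
    obtain ⟨z, hz⟩ : ∃ z : ℤ, z = (a:ℤ) - (b:ℤ) := ⟨_, rfl⟩
    rw [← hz] at hK2 htrZ
    have h4 : (K+z)*(K-z) = 4*((n:ℤ)-1) := by linear_combination hK2
    have hn4 : 4 ≤ n := by omega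
    have hKabs1 : z < K := by nlinarith [hK2, hK0]
    have hKabs2 : -z < K := by nlinarith [hK2, hK0]
    obtain ⟨P, hP⟩ : ∃ P : ℤ, K + z = 2*P := by
      rcases Int.even_or_odd (K+z) with h | h
      · obtain ⟨t, ht⟩ := h; exact ⟨t, by omega⟩
      · exfalso
        have hodd2 : Odd (K - z) := by
          obtain ⟨t, ht⟩ := h; exact ⟨t - z, by omega⟩
        have hodd : Odd ((K+z)*(K-z)) := h.mul hodd2
        rw [h4] at hodd
        exact (Int.not_even_iff_odd.2 hodd) ⟨2*((n:ℤ)-1), by ring⟩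
    obtain ⟨Qv, hKz2⟩ : ∃ q : ℤ, K - z = 2*q := ⟨P - z, by omega⟩
    have hPQ : P * Qv = (n:ℤ) - 1 := by
      have h5 : 4*(P * Qv) = 4*((n:ℤ) - 1) := by
        rw [show (4:ℤ)*(P*Qv) = (2*P)*(2*Qv) by ring, ← hP, ← hKz2]
        exact h4
      exact mul_left_cancel₀ (show (4:ℤ) ≠ 0 by norm_num) h5
    have hPpos : 1 ≤ P := by omega
    have hQpos : 1 ≤ Qv := by omega
    have hm2 : (m:ℤ) * P = ((n:ℤ) - m) * Qv := by
      have h5 : 2*((m:ℤ) * P) = 2*(((n:ℤ) - m) * Qv) := by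
        linear_combination htrZ - (m:ℤ)*hP + ((n:ℤ)-(m:ℤ))*hKz2
      exact mul_left_cancel₀ (show (2:ℤ) ≠ 0 by norm_num) h5
    have hzPQ : z = P - Qv := by omega
    have hgoal : (3:ℤ) ≤ (n:ℤ) + 3*z → n ≤ 9*a := by
      intro h
      omega
    apply hgoal
    rcases lt_trichotomy P 2 with hP1 | hP1 | hP1
    · -- P = 1
      have hP1' : P = 1 := by omega
      subst hP1'
      omega
    · -- P = 2
      subst hP1
      have hn' : (n:ℤ) = 2*Qv + 1 := by omega
      have h6 : (Qv+2)*((m:ℤ) - (2*Qv - 3)) = 6 := by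
        linear_combination hm2 + Qv * hn'
      have ht1 : 1 ≤ (m:ℤ) - (2*Qv - 3) := by
        by_contra hcon
        push_neg at hcon
        have : (Qv+2)*((m:ℤ) - (2*Qv - 3)) ≤ 0 :=
          mul_nonpos_of_nonneg_of_nonpos (by omega) (by omega)
        omega
      have hQ4 : Qv ≤ 4 := by
        have h7 : Qv + 2 ≤ (Qv+2)*((m:ℤ) - (2*Qv - 3)) :=
          le_mul_of_one_le_right (by omega) ht1
        omega
      interval_cases Qv <;> omega
    · -- P ≥ 3
      have h8 : 0 ≤ (P-3)*Qv := mul_nonneg (by omega) (by omega)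
      linarith [h8, hPQ, hP1, hQpos]
open Finset Matrix in
lemma spectral_data {n : ℕ} (Q : Matrix (Fin n) (Fin n) ℂ) (hH : Q.IsHermitian)
    (hdiag : ∀ i, Q i i = 0) (c μ : ℝ) (hc : 0 ≤ μ^2 + 4*c)
    (heq : Q ^ 2 = (c:ℂ) • (1 : Matrix (Fin n) (Fin n) ℂ) + (μ:ℂ) • Q) :
    ∃ m : ℕ, m ≤ n ∧
      (m:ℝ) * (μ + Real.sqrt (μ^2+4*c)) = ((n:ℝ) - m) * (Real.sqrt (μ^2+4*c) - μ) := by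
  set d := Real.sqrt (μ^2+4*c) with hd
  have hd2 : d^2 = μ^2 + 4*c := Real.sq_sqrt hc
  -- each eigenvalue satisfies the quadratic
  have hquad : ∀ k, (hH.eigenvalues k)^2 = c + μ * hH.eigenvalues k := by
    intro k
    have hv : Q *ᵥ ⇑(hH.eigenvectorBasis k) = hH.eigenvalues k • ⇑(hH.eigenvectorBasis k) :=
      hH.mulVec_eigenvectorBasis k
    have h2 : (Q * Q) *ᵥ ⇑(hH.eigenvectorBasis k)
        = (hH.eigenvalues k * hH.eigenvalues k) • ⇑(hH.eigenvectorBasis k) := by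
      rw [← Matrix.mulVec_mulVec, hv, Matrix.mulVec_smul, hv, smul_smul]
    rw [← pow_two, heq] at h2
    have h3 : ((c:ℂ) • (1 : Matrix (Fin n) (Fin n) ℂ) + (μ:ℂ) • Q) *ᵥ ⇑(hH.eigenvectorBasis k)
        = (c:ℂ) • ⇑(hH.eigenvectorBasis k)
          + (μ:ℂ) • (hH.eigenvalues k • ⇑(hH.eigenvectorBasis k)) := by
      rw [Matrix.add_mulVec, Matrix.smul_mulVec, Matrix.smul_mulVec,
        Matrix.one_mulVec, hv]
    rw [h3] at h2
    obtain ⟨j, hj⟩ : ∃ j, (WithLp.equiv 2 (Fin n → ℂ)) (hH.eigenvectorBasis k) j ≠ 0 := by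
      by_contra h
      push_neg at h
      apply hH.eigenvectorBasis.orthonormal.ne_zero k
      ext j
      exact h j
    have h4 := congrFun h2 j
    simp only [Pi.smul_apply, Pi.add_apply, smul_eq_mul, Complex.real_smul] at h4
    have h6 := mul_right_cancel₀ hj
      (show ((hH.eigenvalues k : ℂ) * (hH.eigenvalues k))
          * ((WithLp.equiv 2 (Fin n → ℂ)) (hH.eigenvectorBasis k) j)
        = ((c:ℂ) + (μ:ℂ) * (hH.eigenvalues k))
          * ((WithLp.equiv 2 (Fin n → ℂ)) (hH.eigenvectorBasis k) j) by
        push_cast at h4 ⊢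
        rw [show (WithLp.equiv 2 (Fin n → ℂ)) (hH.eigenvectorBasis k) j = (hH.eigenvectorBasis k).ofLp j from rfl]
        linear_combination -h4)
    have h7 : (hH.eigenvalues k : ℝ) * hH.eigenvalues k = c + μ * hH.eigenvalues k := by
      exact_mod_cast h6
    rw [pow_two]
    exact h7
  -- dichotomy
  have hdich : ∀ k, hH.eigenvalues k = (μ + d)/2 ∨ hH.eigenvalues k = (μ - d)/2 := by
    intro k
    have h0 : (hH.eigenvalues k - (μ + d)/2) * (hH.eigenvalues k - (μ - d)/2) = 0 := by
      have := hquad k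
      nlinarith [this, hd2]
    rcases mul_eq_zero.1 h0 with h | h
    · left; linarith
    · right; linarith
  -- trace is zero
  have htr0 : ∑ k, hH.eigenvalues k = 0 := by
    have ht1 : Q.trace = 0 := by
      rw [Matrix.trace]
      apply Finset.sum_eq_zero
      intro i _
      exact hdiag i
    have ht2 : Q.trace = ∑ k, (hH.eigenvalues k : ℂ) := by
      conv_lhs => rw [hH.spectral_theorem]
      rw [Unitary.conjStarAlgAut_apply, Matrix.trace_mul_cycle]
      rw [Unitary.coe_star_mul_self, Matrix.one_mul, Matrix.trace_diagonal]
      simp [Function.comp]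
    have ht3 : ((∑ k, hH.eigenvalues k : ℝ) : ℂ) = 0 := by
      push_cast
      rw [← ht2]
      exact ht1
    exact_mod_cast ht3
  -- split the sum
  set m := (univ.filter (fun k : Fin n => hH.eigenvalues k = (μ + d)/2)).card with hm
  refine ⟨m, ?_, ?_⟩
  · rw [hm]
    calc (univ.filter _).card ≤ univ.card := Finset.card_filter_le _ _
    _ = n := by rw [Finset.card_univ, Fintype.card_fin]
  · have hsplit : ∑ k, hH.eigenvalues k
        = m * ((μ + d)/2) + ((n:ℝ) - m) * ((μ - d)/2) := by
      rw [← Finset.sum_filter_add_sum_filter_not univ (fun k => hH.eigenvalues k = (μ + d)/2)]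
      have e1 : ∑ k ∈ univ.filter (fun k => hH.eigenvalues k = (μ + d)/2), hH.eigenvalues k
          = (m:ℝ) * ((μ + d)/2) := by
        rw [Finset.sum_congr rfl (fun k hk => (Finset.mem_filter.1 hk).2), Finset.sum_const,
          nsmul_eq_mul, hm]
      have e2 : ∑ k ∈ univ.filter (fun k => ¬ hH.eigenvalues k = (μ + d)/2), hH.eigenvalues k
          = ((n:ℝ) - m) * ((μ - d)/2) := by
        rw [Finset.sum_congr rfl (fun k hk => ?_), Finset.sum_const, nsmul_eq_mul]
        · congr 1
          have hcc : (univ.filter (fun k => ¬ hH.eigenvalues k = (μ + d)/2)).card = n - m := by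
            have := Finset.card_filter_add_card_filter_not
              (s := (univ : Finset (Fin n))) (p := fun k => hH.eigenvalues k = (μ + d)/2)
            rw [Finset.card_univ, Fintype.card_fin] at this
            omega
          rw [hcc]
          have hmn : m ≤ n := by
            calc m ≤ univ.card := Finset.card_filter_le _ _
            _ = n := by rw [Finset.card_univ, Fintype.card_fin]
          push_cast [Nat.cast_sub hmn]
          ring
        · rcases hdich k with h | h
          · exact absurd h (Finset.mem_filter.1 hk).2
          · exact h
      rw [e1, e2]
    rw [htr0] at hsplit
    linarith [hsplit]

open Finset in
theorem cubeRootSeidel_ones_in_each_row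
    (n : ℕ) (Q : Matrix (Fin n) (Fin n) ℂ) (μ : ℝ)
    (hQ : IsCubeRootSeidel Q) (hsf : IsStandardForm Q) (hnt : IsNontrivial Q)
    (heq : Q ^ 2 = ((n : ℂ) - 1) • (1 : Matrix (Fin n) (Fin n) ℂ) + (μ : ℂ) • Q) (e : ℝ) (he : e = ((n : ℝ) - μ - 2) / 3) :
    ∀ i : Fin n, i.val ≠ 0 →
      (Nat.card {j : Fin n // j.val ≠ 0 ∧ j ≠ i ∧ Q i j = 1} : ℝ)
        = (n : ℝ) - 2 - 2 * e ∧
      9 * ((n : ℝ) - 2 - 2 * e) ≥ (n : ℝ) ∧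
      ∃ j : Fin n, j.val ≠ 0 ∧ j ≠ i ∧ Q i j = 1 := by
  classical
  obtain ⟨i0, j0, hij, hQne⟩ := hnt
  have hi0 : i0.val ≠ 0 := by
    intro h
    exact hQne (hsf i0 j0 hij (Or.inl h))
  have hj0 : j0.val ≠ 0 := by
    intro h
    exact hQne (hsf i0 j0 hij (Or.inr h))
  have hn3 : 3 ≤ n := by
    have h1 := i0.isLt
    have h2 := j0.isLt
    have h3 : i0.val ≠ j0.val := fun h => hij (Fin.ext h)
    omega
  -- find a row with an ω entry
  obtain ⟨r, s, hr, hs, hsr, hrs⟩ :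
      ∃ r s : Fin n, r.val ≠ 0 ∧ s.val ≠ 0 ∧ s ≠ r ∧ Q r s = ω3 := by
    rcases hQ.2.2 i0 j0 hij with h | h | h
    · exact absurd h hQne
    · exact ⟨i0, j0, hi0, hj0, Ne.symm hij, h⟩
    · refine ⟨j0, i0, hj0, hi0, hij, ?_⟩
      have h1 : Q j0 i0 = star (Q i0 j0) := by
        have := congrFun (congrFun hQ.1 j0) i0
        rw [Matrix.conjTranspose_apply] at this
        exact this.symm
      rw [h1, h, star_omega_sq]
  -- reference row counts
  obtain ⟨a0, b0, hsum0, hmu0, ha0card, hb0card⟩ := row_counts Q μ hQ hsf hn3 heq r hr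
  have hb0pos : 1 ≤ b0 := by
    rw [hb0card]
    apply Finset.card_pos.2
    exact ⟨s, Finset.mem_filter.2 ⟨Finset.mem_univ s, hs, hsr, hrs⟩⟩
  -- spectral data
  have hc : (0:ℝ) ≤ μ^2 + 4*((n:ℝ)-1) := by
    have : (3:ℝ) ≤ n := by exact_mod_cast hn3
    nlinarith [sq_nonneg μ]
  have heq' : Q ^ 2 = ((((n:ℝ)-1 : ℝ)):ℂ) • (1 : Matrix (Fin n) (Fin n) ℂ) + ((μ:ℝ):ℂ) • Q := by
    rw [heq]
    norm_num
  obtain ⟨m, hmn, htr⟩ := spectral_data Q hQ.1 hQ.2.1 ((n:ℝ)-1) μ hc heq'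
  -- key inequality
  have h9a : n ≤ 9 * a0 := by
    apply key_ineq n a0 b0 m hb0pos hsum0 hmn (Real.sqrt (μ^2+4*((n:ℝ)-1)))
      (Real.sqrt_nonneg _)
    · rw [Real.sq_sqrt hc, hmu0]
    · rw [hmu0]
      exact htr
  -- now the given row
  intro i hi
  obtain ⟨a, b, hsum, hmu, hacard, hbcard⟩ := row_counts Q μ hQ hsf hn3 heq i hi
  -- a = a0, b = b0
  have hsumR : (a:ℝ) + 2*b + 2 = n := by exact_mod_cast hsum
  have hsumR0 : (a0:ℝ) + 2*b0 + 2 = n := by exact_mod_cast hsum0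
  have haR : (a:ℝ) = a0 := by linarith [hmu, hmu0]
  have hbR : (b:ℝ) = b0 := by linarith [hmu, hmu0]
  have heb : e = b := by
    rw [he]
    rw [← hmu]
    field_simp
    linarith [hsumR]
  have hNat : Nat.card {j : Fin n // j.val ≠ 0 ∧ j ≠ i ∧ Q i j = 1}
      = (univ.filter (fun j : Fin n => j.val ≠ 0 ∧ j ≠ i ∧ Q i j = 1)).card := by
    rw [Nat.card_eq_fintype_card, Fintype.card_subtype]
  have hcard1 : (Nat.card {j : Fin n // j.val ≠ 0 ∧ j ≠ i ∧ Q i j = 1} : ℝ)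
      = (n:ℝ) - 2 - 2*e := by
    rw [hNat, ← hacard, heb]
    linarith [hsumR]
  refine ⟨hcard1, ?_, ?_⟩
  · rw [show (n:ℝ) - 2 - 2*e = (a:ℝ) by rw [heb]; linarith [hsumR]]
    have : (n:ℝ) ≤ 9*a0 := by exact_mod_cast h9a
    rw [haR]
    linarith
  · have hapos : 1 ≤ a := by
      have : (a:ℝ) = (a0:ℝ) := haR
      have ha0 : a = a0 := by exact_mod_cast this
      omega
    have : 0 < (univ.filter (fun j : Fin n => j.val ≠ 0 ∧ j ≠ i ∧ Q i j = 1)).card := by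
      rw [← hacard]; omega
    obtain ⟨j, hj⟩ := Finset.card_pos.1 this
    obtain ⟨-, hj1, hj2, hj3⟩ := Finset.mem_filter.1 hj
    exact ⟨j, hj1, hj2, hj3⟩
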